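/- Let 0 < α ≤ β ≤ 1, let μ be a finite nonnegative compactly supported Borel measure on ℝ² with finite (α−ε)-energy, and let λ be a finite Borel measure on S¹ with λ(B(ω,δ)) ≤ Cδ^α. Then ∫_{S¹} I_{α−ε}(μ_ω) dλ(ω) ≤ C(ε)·I_{α−ε}(μ), where I_s(ν) = ∬ |y₁−y₂|^{−s} dν(y₁)dν(y₂) and μ_ω is the projection of μ in direction ω. -/

import Mathlib

open MeasureTheory Metric Set
open scoped ENNReal

noncomputable section

abbrev Plane := EuclideanSpace ℝ (Fin 2)
abbrev Circ := Metric.sphere (0 : Plane) 1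

namespace Stmt16Aux

/-- rotate a vector by 90 degrees -/
def perp (e : Plane) : Plane := (WithLp.equiv 2 (Fin 2 → ℝ)).symm ![-(e 1), e 0]

lemma inner_eq (x y : Plane) : (inner ℝ x y : ℝ) = x 0 * y 0 + x 1 * y 1 := by
  simp [PiLp.inner_apply, Fin.sum_univ_two, mul_comm]

lemma perp0 (e : Plane) : perp e 0 = -(e 1) := rfl
lemma perp1 (e : Plane) : perp e 1 = e 0 := rfl

lemma norm_sq_eq (x : Plane) : ‖x‖ ^ 2 = x 0 * x 0 + x 1 * x 1 := by
  rw [← real_inner_self_eq_norm_sq, inner_eq]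

lemma norm_perp (e : Plane) : ‖perp e‖ = ‖e‖ := by
  have h : ‖perp e‖ ^ 2 = ‖e‖ ^ 2 := by
    rw [norm_sq_eq, norm_sq_eq, perp0, perp1]; ring
  nlinarith [norm_nonneg (perp e), norm_nonneg e]

lemma pythagoras (e ω : Plane) :
    (inner ℝ e ω : ℝ) ^ 2 + (inner ℝ (perp e) ω : ℝ) ^ 2 = ‖e‖ ^ 2 * ‖ω‖ ^ 2 := by
  rw [inner_eq, inner_eq, norm_sq_eq, norm_sq_eq, perp0, perp1]; ring

/-- Geometry: a unit vector almost orthogonal to the unit vector `e` is close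
to `perp e` or to `-perp e`. -/
lemma geom {e ω : Plane} (he : ‖e‖ = 1) (hω : ‖ω‖ = 1) {r : ℝ}
    (h : |(inner ℝ e ω : ℝ)| < r) :
    ‖ω - perp e‖ < 2 * r ∨ ‖ω + perp e‖ < 2 * r := by
  have hr : 0 < r := lt_of_le_of_lt (abs_nonneg _) h
  have hpy := pythagoras e ω
  rw [he, hω] at hpy
  have hc2 : (inner ℝ e ω : ℝ) ^ 2 < r ^ 2 := by
    have := abs_nonneg (inner ℝ e ω : ℝ)
    nlinarith [sq_abs (inner ℝ e ω : ℝ)]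
  set sN : ℝ := inner ℝ (perp e) ω with hsN
  have hsle : sN ^ 2 ≤ 1 := by nlinarith [sq_nonneg (inner ℝ e ω : ℝ)]
  rcases le_or_gt 0 sN with hpos | hneg
  · left
    have hsq : ‖ω - perp e‖ ^ 2 = 2 - 2 * sN := by
      rw [norm_sub_sq_real, hω, norm_perp, he, real_inner_comm]; ring
    have h1 : sN ≤ 1 := by nlinarith
    have hlt : ‖ω - perp e‖ ^ 2 < (2 * r) ^ 2 := by nlinarith
    exact lt_of_pow_lt_pow_left₀ 2 (by positivity) hlt
  · right
    have hsq : ‖ω + perp e‖ ^ 2 = 2 + 2 * sN := by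
      rw [norm_add_sq_real, hω, norm_perp, he, real_inner_comm]; ring
    have h1 : -1 ≤ sN := by nlinarith
    have hlt : ‖ω + perp e‖ ^ 2 < (2 * r) ^ 2 := by nlinarith
    exact lt_of_pow_lt_pow_left₀ 2 (by positivity) hlt

end Stmt16Aux

open Stmt16Aux

theorem stmt16 (α β ε : ℝ) (hα : 0 < α) (hαβ : α ≤ β) (hβ : β ≤ 1) (hε : 0 < ε) (hεα : ε < α)
    (C : ℝ) (lam : Measure Circ) [IsFiniteMeasure lam]
    (hfrost : ∀ (ω : Circ) (δ : ℝ), 0 < δ →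
      lam (Metric.ball ω δ) ≤ ENNReal.ofReal (C * δ ^ α)) :
    ∃ C' > (0 : ℝ),
      ∀ (μ : Measure Plane), IsFiniteMeasure μ →
        (∃ K : Set Plane, IsCompact K ∧ μ Kᶜ = 0) →
        (∫⁻ x₁, ∫⁻ x₂, ENNReal.ofReal (‖x₁ - x₂‖ ^ (-(α - ε))) ∂μ ∂μ) < ⊤ →
        (∫⁻ ω, (∫⁻ x₁, ∫⁻ x₂,
            ENNReal.ofReal (|(inner ℝ x₁ (ω : Plane) : ℝ) - (inner ℝ x₂ (ω : Plane) : ℝ)|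
              ^ (-(α - ε))) ∂μ ∂μ) ∂lam) ≤
          ENNReal.ofReal C' *
            ∫⁻ x₁, ∫⁻ x₂, ENNReal.ofReal (‖x₁ - x₂‖ ^ (-(α - ε))) ∂μ ∂μ := by
  set s : ℝ := α - ε with hs_def
  have hs0 : 0 < s := by simp only [hs_def]; linarith
  have hsα : s < α := by simp only [hs_def]; linarith
  set C₀ : ℝ := max C 0 with hC₀_def
  have hC₀ : 0 ≤ C₀ := le_max_right _ _
  have hfrost' : ∀ (ω : Circ) (δ : ℝ), 0 < δ →
      lam (Metric.ball ω δ) ≤ ENNReal.ofReal (C₀ * δ ^ α) := by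
    intro ω δ hδ
    exact (hfrost ω δ hδ).trans (ENNReal.ofReal_le_ofReal
      (mul_le_mul_of_nonneg_right (le_max_left _ _) (Real.rpow_nonneg hδ.le _)))
  set K : ℝ := 2 * C₀ * 2 ^ α with hK_def
  have hK : 0 ≤ K := by positivity
  set B : ℝ := ∫ t in Ioi (1:ℝ), K * t ^ (-(α / s)) with hB_def
  have hB : 0 ≤ B := by
    apply setIntegral_nonneg measurableSet_Ioi
    intro t ht
    have ht0 : (0:ℝ) < t := lt_trans one_pos ht
    positivity
  set A : ℝ := C₀ * 3 ^ α + B with hA_def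
  have hA : 0 ≤ A := by positivity
  -- The key angular estimate
  have key : ∀ e : Plane, ‖e‖ = 1 →
      (∫⁻ ω : Circ, ENNReal.ofReal (|(inner ℝ e (ω : Plane) : ℝ)| ^ (-s)) ∂lam)
        ≤ ENNReal.ofReal A := by
    intro e he
    have hmble : AEMeasurable (fun ω : Circ => |(inner ℝ e (ω : Plane) : ℝ)| ^ (-s)) lam :=
      ((((Continuous.inner continuous_const continuous_subtype_val).abs).measurable).pow_const
        _).aemeasurable
    rw [lintegral_eq_lintegral_meas_lt lam
      (Filter.Eventually.of_forall (fun ω => Real.rpow_nonneg (abs_nonneg _) _)) hmble]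
    -- the distribution-function bound for t > 0
    have hdist : ∀ t : ℝ, 0 < t →
        lam {ω : Circ | t < |(inner ℝ e (ω : Plane) : ℝ)| ^ (-s)} ≤
          ENNReal.ofReal (K * t ^ (-(α / s))) := by
      intro t ht
      set r : ℝ := t ^ (-s⁻¹) with hr_def
      have hr : 0 < r := Real.rpow_pos_of_pos ht _
      have hperp : perp e ∈ Circ := by
        rw [mem_sphere_zero_iff_norm, norm_perp, he]
      have hperp' : -perp e ∈ Circ := by
        rw [mem_sphere_zero_iff_norm, norm_neg, norm_perp, he]
      set p : Circ := ⟨perp e, hperp⟩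
      set q : Circ := ⟨-perp e, hperp'⟩
      have hsub : {ω : Circ | t < |(inner ℝ e (ω : Plane) : ℝ)| ^ (-s)} ⊆
          Metric.ball p (2 * r) ∪ Metric.ball q (2 * r) := by
        intro ω hω
        simp only [mem_setOf_eq] at hω
        have hne : (inner ℝ e (ω : Plane) : ℝ) ≠ 0 := by
          intro h0
          rw [h0, abs_zero, Real.zero_rpow (show -s ≠ 0 by intro h; simp at h; linarith)] at hω
          linarith
        have hlt : |(inner ℝ e (ω : Plane) : ℝ)| < r := by
          by_contra hle
          push_neg at hle
          have hle2 : |(inner ℝ e (ω : Plane) : ℝ)| ^ (-s) ≤ r ^ (-s) :=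
            Real.rpow_le_rpow_of_nonpos hr hle (by linarith)
          have hrs : r ^ (-s) = t := by
            rw [hr_def, ← Real.rpow_mul ht.le,
              show -s⁻¹ * -s = s⁻¹ * s by ring, inv_mul_cancel₀ hs0.ne', Real.rpow_one]
          rw [hrs] at hle2
          linarith
        have hωn : ‖(ω : Plane)‖ = 1 := mem_sphere_zero_iff_norm.mp ω.2
        rcases geom he hωn hlt with h | h
        · left
          rw [mem_ball, Subtype.dist_eq, dist_eq_norm]
          exact h
        · right
          rw [mem_ball, Subtype.dist_eq, dist_eq_norm]
          simpa [q, sub_neg_eq_add] using h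
      calc lam {ω : Circ | t < |(inner ℝ e (ω : Plane) : ℝ)| ^ (-s)}
          ≤ lam (Metric.ball p (2 * r) ∪ Metric.ball q (2 * r)) := measure_mono hsub
        _ ≤ lam (Metric.ball p (2 * r)) + lam (Metric.ball q (2 * r)) := measure_union_le _ _
        _ ≤ ENNReal.ofReal (C₀ * (2 * r) ^ α) + ENNReal.ofReal (C₀ * (2 * r) ^ α) := by
            gcongr <;> exact hfrost' _ _ (by positivity)
        _ = ENNReal.ofReal (C₀ * (2 * r) ^ α + C₀ * (2 * r) ^ α) :=
            (ENNReal.ofReal_add (by positivity) (by positivity)).symm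
        _ ≤ ENNReal.ofReal (K * t ^ (-(α / s))) := by
            apply ENNReal.ofReal_le_ofReal
            have h2r : (2 * r) ^ α = 2 ^ α * r ^ α := Real.mul_rpow (by norm_num) hr.le
            have hrα : r ^ α = t ^ (-(α / s)) := by
              rw [hr_def, ← Real.rpow_mul ht.le]
              congr 1
              field_simp
            rw [h2r, hrα, hK_def]
            exact le_of_eq (by ring)
    have hsplit : (Ioi (0:ℝ)) = Ioc 0 1 ∪ Ioi 1 := (Ioc_union_Ioi_eq_Ioi zero_le_one).symm
    rw [hsplit, lintegral_union measurableSet_Ioi (Ioc_disjoint_Ioi le_rfl)]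
    have h1 : (∫⁻ t in Ioc (0:ℝ) 1,
        lam {ω : Circ | t < |(inner ℝ e (ω : Plane) : ℝ)| ^ (-s)}) ≤
        ENNReal.ofReal (C₀ * 3 ^ α) := by
      have hce : e ∈ Circ := mem_sphere_zero_iff_norm.mpr he
      have huniv : lam univ ≤ ENNReal.ofReal (C₀ * 3 ^ α) := by
        have hsub3 : (univ : Set Circ) ⊆ Metric.ball (⟨e, hce⟩ : Circ) 3 := by
          intro ω _
          rw [mem_ball, Subtype.dist_eq, dist_eq_norm]
          have h1 := mem_sphere_zero_iff_norm.mp ω.2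
          calc ‖(ω : Plane) - e‖ ≤ ‖(ω : Plane)‖ + ‖e‖ := norm_sub_le _ _
            _ < 3 := by rw [h1, he]; norm_num
        exact (measure_mono hsub3).trans (hfrost' _ 3 (by norm_num))
      calc (∫⁻ t in Ioc (0:ℝ) 1,
            lam {ω : Circ | t < |(inner ℝ e (ω : Plane) : ℝ)| ^ (-s)})
          ≤ ∫⁻ _ in Ioc (0:ℝ) 1, ENNReal.ofReal (C₀ * 3 ^ α) :=
            setLIntegral_mono' measurableSet_Ioc
              (fun t _ => (measure_mono (subset_univ _)).trans huniv)
        _ = ENNReal.ofReal (C₀ * 3 ^ α) := by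
            rw [setLIntegral_const, Real.volume_Ioc]
            simp
    have h2 : (∫⁻ t in Ioi (1:ℝ),
        lam {ω : Circ | t < |(inner ℝ e (ω : Plane) : ℝ)| ^ (-s)}) ≤ ENNReal.ofReal B := by
      have hexp : -(α / s) < -1 := by
        have : 1 < α / s := (one_lt_div hs0).mpr hsα
        linarith
      have hint : IntegrableOn (fun t : ℝ => K * t ^ (-(α / s))) (Ioi 1) :=
        (integrableOn_Ioi_rpow_of_lt hexp one_pos).const_mul K
      have hnn : 0 ≤ᵐ[volume.restrict (Ioi (1:ℝ))] fun t : ℝ => K * t ^ (-(α / s)) :=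
        (ae_restrict_iff' measurableSet_Ioi).mpr (Filter.Eventually.of_forall
          (fun t ht => by
            have ht0 : (0:ℝ) < t := lt_trans one_pos ht
            positivity))
      calc (∫⁻ t in Ioi (1:ℝ),
            lam {ω : Circ | t < |(inner ℝ e (ω : Plane) : ℝ)| ^ (-s)})
          ≤ ∫⁻ t in Ioi (1:ℝ), ENNReal.ofReal (K * t ^ (-(α / s))) :=
            setLIntegral_mono' measurableSet_Ioi
              (fun t ht => hdist t (lt_trans one_pos ht))
        _ = ENNReal.ofReal B := by
            rw [hB_def, ofReal_integral_eq_lintegral_ofReal hint hnn]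
    calc (∫⁻ t in Ioc (0:ℝ) 1,
          lam {ω : Circ | t < |(inner ℝ e (ω : Plane) : ℝ)| ^ (-s)}) +
        (∫⁻ t in Ioi (1:ℝ),
          lam {ω : Circ | t < |(inner ℝ e (ω : Plane) : ℝ)| ^ (-s)})
        ≤ ENNReal.ofReal (C₀ * 3 ^ α) + ENNReal.ofReal B := add_le_add h1 h2
      _ = ENNReal.ofReal A := (ENNReal.ofReal_add (by positivity) hB).symm
  -- pointwise (in x₁, x₂) bound on the angular integral
  have hpt : ∀ x₁ x₂ : Plane,
      (∫⁻ ω : Circ, ENNReal.ofReal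
          (|(inner ℝ x₁ (ω : Plane) : ℝ) - (inner ℝ x₂ (ω : Plane) : ℝ)| ^ (-s)) ∂lam)
        ≤ ENNReal.ofReal (A + 1) * ENNReal.ofReal (‖x₁ - x₂‖ ^ (-s)) := by
    intro x₁ x₂
    simp only [← inner_sub_left]
    by_cases hv : x₁ - x₂ = 0
    · rw [hv]
      simp [Real.zero_rpow (show -s ≠ 0 by intro h; simp at h; linarith)]
    · set v : Plane := x₁ - x₂ with hv_def
      set e : Plane := ‖v‖⁻¹ • v with he_def
      have he : ‖e‖ = 1 := by
        rw [he_def, norm_smul, norm_inv, norm_norm, inv_mul_cancel₀ (norm_ne_zero_iff.mpr hv)]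
      have hveq : ∀ ω : Plane, |(inner ℝ v ω : ℝ)| = ‖v‖ * |(inner ℝ e ω : ℝ)| := by
        intro ω
        rw [he_def, real_inner_smul_left, abs_mul, abs_inv, abs_norm, ← mul_assoc,
          mul_inv_cancel₀ (norm_ne_zero_iff.mpr hv), one_mul]
      calc (∫⁻ ω : Circ, ENNReal.ofReal (|(inner ℝ v (ω : Plane) : ℝ)| ^ (-s)) ∂lam)
          = ∫⁻ ω : Circ, ENNReal.ofReal (‖v‖ ^ (-s)) *
              ENNReal.ofReal (|(inner ℝ e (ω : Plane) : ℝ)| ^ (-s)) ∂lam := by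
            apply lintegral_congr
            intro ω
            rw [hveq, Real.mul_rpow (norm_nonneg v) (abs_nonneg _),
              ENNReal.ofReal_mul (Real.rpow_nonneg (norm_nonneg v) _)]
        _ = ENNReal.ofReal (‖v‖ ^ (-s)) *
              ∫⁻ ω : Circ, ENNReal.ofReal (|(inner ℝ e (ω : Plane) : ℝ)| ^ (-s)) ∂lam :=
            lintegral_const_mul' _ _ ENNReal.ofReal_ne_top
        _ ≤ ENNReal.ofReal (‖v‖ ^ (-s)) * ENNReal.ofReal A := by
            gcongr
            exact key e he
        _ ≤ ENNReal.ofReal (A + 1) * ENNReal.ofReal (‖v‖ ^ (-s)) := by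
            rw [mul_comm]
            gcongr
            linarith
  refine ⟨A + 1, by linarith, ?_⟩
  intro μ _ _ _
  -- measurability of the full integrand
  have hmg : Measurable (fun pp : (Circ × Plane) × Plane =>
      ENNReal.ofReal (|(inner ℝ pp.1.2 ((pp.1.1 : Circ) : Plane) : ℝ) -
        (inner ℝ pp.2 ((pp.1.1 : Circ) : Plane) : ℝ)| ^ (-s))) := by
    apply Measurable.ennreal_ofReal
    apply Measurable.pow_const
    apply Continuous.measurable
    apply Continuous.abs
    exact (Continuous.inner continuous_fst.snd
        (continuous_subtype_val.comp continuous_fst.fst)).sub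
      (Continuous.inner continuous_snd (continuous_subtype_val.comp continuous_fst.fst))
  have hswap1 : (∫⁻ ω : Circ, (∫⁻ x₁, ∫⁻ x₂, ENNReal.ofReal
        (|(inner ℝ x₁ (ω : Plane) : ℝ) - (inner ℝ x₂ (ω : Plane) : ℝ)| ^ (-s)) ∂μ ∂μ) ∂lam)
      = ∫⁻ x₁, (∫⁻ ω : Circ, (∫⁻ x₂, ENNReal.ofReal
        (|(inner ℝ x₁ (ω : Plane) : ℝ) - (inner ℝ x₂ (ω : Plane) : ℝ)| ^ (-s)) ∂μ) ∂lam) ∂μ := by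
    apply lintegral_lintegral_swap
    exact (hmg.lintegral_prod_right').aemeasurable
  have hswap2 : ∀ x₁ : Plane, (∫⁻ ω : Circ, (∫⁻ x₂, ENNReal.ofReal
        (|(inner ℝ x₁ (ω : Plane) : ℝ) - (inner ℝ x₂ (ω : Plane) : ℝ)| ^ (-s)) ∂μ) ∂lam)
      = ∫⁻ x₂, (∫⁻ ω : Circ, ENNReal.ofReal
        (|(inner ℝ x₁ (ω : Plane) : ℝ) - (inner ℝ x₂ (ω : Plane) : ℝ)| ^ (-s)) ∂lam) ∂μ := by
    intro x₁
    apply lintegral_lintegral_swap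
    apply Measurable.aemeasurable
    apply Measurable.ennreal_ofReal
    apply Measurable.pow_const
    apply Continuous.measurable
    apply Continuous.abs
    exact (Continuous.inner continuous_const
        (continuous_subtype_val.comp continuous_fst)).sub
      (Continuous.inner continuous_snd (continuous_subtype_val.comp continuous_fst))
  rw [hswap1]
  calc (∫⁻ x₁, (∫⁻ ω : Circ, (∫⁻ x₂, ENNReal.ofReal
        (|(inner ℝ x₁ (ω : Plane) : ℝ) - (inner ℝ x₂ (ω : Plane) : ℝ)| ^ (-s)) ∂μ) ∂lam) ∂μ)
      = ∫⁻ x₁, ∫⁻ x₂, (∫⁻ ω : Circ, ENNReal.ofReal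
        (|(inner ℝ x₁ (ω : Plane) : ℝ) - (inner ℝ x₂ (ω : Plane) : ℝ)| ^ (-s)) ∂lam) ∂μ ∂μ :=
        lintegral_congr hswap2
    _ ≤ ∫⁻ x₁, ∫⁻ x₂, ENNReal.ofReal (A + 1) * ENNReal.ofReal (‖x₁ - x₂‖ ^ (-s)) ∂μ ∂μ :=
        lintegral_mono fun x₁ => lintegral_mono fun x₂ => hpt x₁ x₂
    _ = ENNReal.ofReal (A + 1) *
          ∫⁻ x₁, ∫⁻ x₂, ENNReal.ofReal (‖x₁ - x₂‖ ^ (-s)) ∂μ ∂μ := by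
        rw [← lintegral_const_mul' _ _ ENNReal.ofReal_ne_top]
        apply lintegral_congr
        intro x₁
        rw [← lintegral_const_mul' _ _ ENNReal.ofReal_ne_top]
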